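/- Let (Mᵢ)_{i∈I} be an infinite family of Galois extensions of a field K inside a fixed algebraic closure, pairwise linearly disjoint over K, and let E/K be a finite Galois extension. Then Mᵢ is linearly disjoint from E over K for all but finitely many i ∈ I. -/

import Mathlib

open Polynomial IntermediateField

/-- If `E/K` is a finite Galois extension inside the algebraic closure and `M` is any
intermediate field with `M ⊓ E = ⊥`, then `M` and `E` are linearly disjoint over `K`. -/
theorem IntermediateField.LinearDisjoint.of_inf_eq_bot_aux {K : Type*} [Field K]
    (M E : IntermediateField K (AlgebraicClosure K))
    [FiniteDimensional K E] [IsGalois K E] (h : M ⊓ E = ⊥) : M.LinearDisjoint E := by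
  classical
  obtain ⟨α, hα⟩ := Field.exists_primitive_element K E
  set Ω := AlgebraicClosure K
  set β : Ω := (α : Ω) with hβ
  have hβE : β ∈ E := α.2
  have hintK : IsIntegral K β := (IsIntegral.of_finite K α).map E.val
  have hEeq : K⟮β⟯ = E := by
    refine le_antisymm (adjoin_simple_le_iff.2 hβE) ?_
    intro x hx
    have hx' : (⟨x, hx⟩ : E) ∈ K⟮α⟯ := hα ▸ IntermediateField.mem_top
    have hmem : x ∈ (K⟮α⟯).map E.val := ⟨⟨x, hx⟩, hx', rfl⟩
    rwa [IntermediateField.adjoin_map, Set.image_singleton] at hmem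
  set q := minpoly K β with hq
  have hq0 : q ≠ 0 := minpoly.ne_zero hintK
  have hqα : minpoly K α = q :=
    (minpoly.algHom_eq E.val (fun a b hab => Subtype.ext hab) α).symm
  have hqsplit : (q.map (algebraMap K E)).Splits := by
    rw [← hqα]; exact IsGalois.splits K α
  set p := minpoly M β with hp
  have hintM : IsIntegral M β := hintK.tower_top
  have hpm : p.Monic := minpoly.monic hintM
  set P := p.map (algebraMap M Ω) with hP
  have hPQ : P ∣ q.map (algebraMap K Ω) := by
    have h1 : p ∣ q.map (algebraMap K M) := minpoly.dvd_map_of_isScalarTower K M β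
    have h2 := Polynomial.map_dvd (algebraMap M Ω) h1
    rwa [Polynomial.map_map, ← IsScalarTower.algebraMap_eq] at h2
  have hQ0 : q.map (algebraMap K Ω) ≠ 0 := (Polynomial.map_ne_zero_iff
    (algebraMap K Ω).injective).2 hq0
  have hroots : ∀ r ∈ (q.map (algebraMap K Ω)).roots, r ∈ E := by
    intro r hr
    rw [IsScalarTower.algebraMap_eq K E Ω, ← Polynomial.map_map,
      hqsplit.roots_map (algebraMap E Ω)] at hr
    obtain ⟨s, _, rfl⟩ := Multiset.mem_map.1 hr
    exact s.2
  have hPsplits : P.Splits := IsAlgClosed.splits P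
  have hProots : ∀ r ∈ P.roots, r ∈ E := fun r hr =>
    hroots r (Multiset.mem_of_le (Polynomial.roots.le_of_dvd hQ0 hPQ) hr)
  have hPlifts : P ∈ Polynomial.lifts (algebraMap E Ω) :=
    hPsplits.mem_lift_of_roots_mem_range (hpm.map _) (algebraMap E Ω)
      (fun a ha => ⟨⟨a, hProots a ha⟩, rfl⟩)
  have hcoeffE : ∀ n, P.coeff n ∈ E := by
    intro n
    obtain ⟨y, hy⟩ := (Polynomial.lifts_iff_coeff_lifts P).1 hPlifts n
    rw [← hy]; exact y.2
  have hcoeffM : ∀ n, P.coeff n ∈ M := fun n => by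
    rw [hP, Polynomial.coeff_map]; exact (p.coeff n).2
  have hlifts : P ∈ Polynomial.lifts (algebraMap K Ω) := by
    refine (Polynomial.lifts_iff_coeff_lifts P).2 fun n => ?_
    have hmem : P.coeff n ∈ M ⊓ E := ⟨hcoeffM n, hcoeffE n⟩
    rw [h, IntermediateField.mem_bot] at hmem
    exact hmem
  obtain ⟨q₀, hq₀map, hq₀deg, hq₀monic⟩ :=
    Polynomial.lifts_and_degree_eq_and_monic hlifts (hpm.map _)
  have hq₀root : Polynomial.aeval β q₀ = 0 := by
    rw [Polynomial.aeval_def, ← Polynomial.eval_map, hq₀map]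
    have : P.eval β = Polynomial.aeval β p := by
      rw [Polynomial.aeval_def, ← Polynomial.eval_map]
    rw [this, minpoly.aeval]
  have hdvd : q ∣ q₀ := minpoly.dvd K β hq₀root
  have hdegP : P.natDegree = p.natDegree := hpm.natDegree_map _
  have hdeg1 : q.natDegree ≤ p.natDegree := by
    have h1 : q.natDegree ≤ q₀.natDegree :=
      Polynomial.natDegree_le_of_dvd hdvd hq₀monic.ne_zero
    have h2 : q₀.natDegree = P.natDegree := Polynomial.natDegree_eq_of_degree_eq hq₀deg
    omega
  have hdeg2 : p.natDegree ≤ q.natDegree := by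
    have h1 : p.natDegree ≤ (q.map (algebraMap K M)).natDegree :=
      Polynomial.natDegree_le_of_dvd (minpoly.dvd_map_of_isScalarTower K M β)
        ((Polynomial.map_ne_zero_iff (algebraMap K M).injective).2 hq0)
    rwa [Polynomial.natDegree_map] at h1
  have hdeg : p.natDegree = q.natDegree := le_antisymm hdeg2 hdeg1
  have hLI : LinearIndependent M (fun i : Fin q.natDegree => β ^ (i : ℕ)) := by
    have hli := linearIndependent_pow (K := M) (S := Ω) β
    rw [← hp, hdeg] at hli
    exact hli
  rw [← hEeq]
  refine IntermediateField.LinearDisjoint.of_basis_right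
    (IntermediateField.adjoin.powerBasis hintK).basis ?_
  have hfun : ((K⟮β⟯).val ∘ (IntermediateField.adjoin.powerBasis hintK).basis) =
      fun i : Fin q.natDegree => β ^ (i : ℕ) := by
    funext i
    simp only [Function.comp_apply, PowerBasis.basis_eq_pow,
      IntermediateField.adjoin.powerBasis_gen, map_pow]
    rw [show ((K⟮β⟯).val (AdjoinSimple.gen K β)) = β from rfl]
  rw [hfun]
  exact hLI

/-- Let `(Mᵢ)_{i ∈ I}` be an infinite family of Galois extensions of `K` inside a fixed
algebraic closure which are pairwise linearly disjoint over `K`, and let `E/K` be a finite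
Galois extension. Then `Mᵢ` is linearly disjoint from `E` over `K` for all but finitely
many `i`. -/
theorem linearDisjoint_cofinite (K : Type*) [Field K] (I : Type*) [Infinite I]
    (M : I → IntermediateField K (AlgebraicClosure K))
    (hGal : ∀ i, IsGalois K (M i))
    (hdisj : ∀ i j, i ≠ j → (M i).LinearDisjoint (M j))
    (E : IntermediateField K (AlgebraicClosure K))
    [FiniteDimensional K E] [IsGalois K E] :
    {i : I | ¬ (M i).LinearDisjoint E}.Finite := by
  classical
  haveI : Algebra.IsAlgebraic K E := Algebra.IsAlgebraic.of_finite K E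
  haveI : Finite (IntermediateField K ↥E) :=
    Field.finite_intermediateField_of_exists_primitive_element K E
      (Field.exists_primitive_element K E)
  set S := {i : I | ¬ (M i).LinearDisjoint E} with hS
  have key2 : ∀ i ∈ S, M i ⊓ E ≠ ⊥ := fun i hi hbot =>
    hi (IntermediateField.LinearDisjoint.of_inf_eq_bot_aux (M i) E hbot)
  let φ : S → IntermediateField K ↥E := fun i => (M (i : I) ⊓ E).comap E.val
  have hφ : Function.Injective φ := by
    rintro ⟨i, hi⟩ ⟨j, hj⟩ hij
    by_contra hne
    have hne' : i ≠ j := fun hh => hne (Subtype.ext hh)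
    have hle1 : M i ⊓ E ≤ E.val.fieldRange := by
      rw [IntermediateField.fieldRange_val]; exact inf_le_right
    have hle2 : M j ⊓ E ≤ E.val.fieldRange := by
      rw [IntermediateField.fieldRange_val]; exact inf_le_right
    have h1 : M i ⊓ E = M j ⊓ E := by
      have hmap := congrArg (IntermediateField.map E.val) hij
      simp only [φ] at hmap
      rwa [IntermediateField.map_comap_eq_self hle1,
        IntermediateField.map_comap_eq_self hle2] at hmap
    have h2 : M i ⊓ M j = ⊥ := (hdisj i j hne').inf_eq_bot
    refine key2 i hi ?_
    have h3 : M i ⊓ E ≤ M i ⊓ M j :=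
      le_inf inf_le_left (le_trans (le_of_eq h1) inf_le_left)
    exact le_bot_iff.1 (h2 ▸ h3)
  exact Set.finite_coe_iff.mp (Finite.of_injective φ hφ)
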